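/- For every positive integer k, with q_k(x,y) := sin(kx)(cos y − cos 2y) and v_k(x,y) := sin(kx)( (k²+1)⁻¹ cos y − 4(k²+4)⁻¹ cos 2y ), one has ∫_{(0,π)×(0,π)} |∇v_k(x,y)|² dx dy = (π²/4)·(1/(k²+1) + 16/(k²+4)) and ∫_{(0,π)×(0,π)} (∂q_k/∂y (x,y))² dx dy = 5π²/4; consequently the ratio ( ∫ |∇v_k|² )^{1/2} / ( ∫ (∂_y q_k)² )^{1/2} equals (1/√5)·(1/(k²+1) + 16/(k²+4))^{1/2}, which tends to 0 as k → ∞. -/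

import Mathlib

open scoped Real

/-- `q_k(x,y) = sin(kx)(cos y − cos 2y)`. -/
noncomputable def qfun (k : ℕ) (x y : ℝ) : ℝ :=
  Real.sin ((k : ℝ) * x) * (Real.cos y - Real.cos (2 * y))

/-- `v_k(x,y) = sin(kx)((k²+1)⁻¹ cos y − 4(k²+4)⁻¹ cos 2y)`. -/
noncomputable def vfun (k : ℕ) (x y : ℝ) : ℝ :=
  Real.sin ((k : ℝ) * x) *
    (((k : ℝ) ^ 2 + 1)⁻¹ * Real.cos y - 4 * ((k : ℝ) ^ 2 + 4)⁻¹ * Real.cos (2 * y))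

section Aux

lemma Icos (c : ℝ) (hc : c ≠ 0) (h : Real.sin (c * π) = 0) :
    ∫ y in (0:ℝ)..π, Real.cos (c * y) = 0 := by
  have hd : ∀ y ∈ Set.uIcc (0:ℝ) π,
      HasDerivAt (fun u => Real.sin (c * u) / c) (Real.cos (c * y)) y := by
    intro y _
    have h1 : HasDerivAt (fun u => Real.sin (c * u)) (Real.cos (c * y) * c) y := by
      simpa [Function.comp_def] using (Real.hasDerivAt_sin (c * y)).comp y ((hasDerivAt_id y).const_mul c)
    simpa [mul_div_cancel_right₀ _ hc] using h1.div_const c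
  rw [intervalIntegral.integral_eq_sub_of_hasDerivAt hd
    (Continuous.intervalIntegrable (by fun_prop) _ _)]
  simp [h]

lemma Iconst5 (c0 c1 c2 c3 c4 : ℝ) :
    ∫ y in (0:ℝ)..π, (c0 + c1 * Real.cos y + c2 * Real.cos (2*y)
      + c3 * Real.cos (3*y) + c4 * Real.cos (4*y)) = π * c0 := by
  have ic : ∀ m : ℕ, 1 ≤ m → ∫ y in (0:ℝ)..π, Real.cos ((m:ℝ) * y) = 0 := by
    intro m hm
    refine Icos m (by exact_mod_cast Nat.one_le_iff_ne_zero.mp hm) ?_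
    exact Real.sin_nat_mul_pi m
  have i2 : ∫ y in (0:ℝ)..π, Real.cos (2*y) = 0 := by simpa using ic 2 (by norm_num)
  have i3 : ∫ y in (0:ℝ)..π, Real.cos (3*y) = 0 := by simpa using ic 3 (by norm_num)
  have i4 : ∫ y in (0:ℝ)..π, Real.cos (4*y) = 0 := by simpa using ic 4 (by norm_num)
  have i1 : ∫ y in (0:ℝ)..π, Real.cos y = 0 := by simp [integral_cos]
  have I : ∀ f g : ℝ → ℝ, Continuous f → Continuous g →
      (∫ y in (0:ℝ)..π, (f y + g y)) = (∫ y in (0:ℝ)..π, f y) + ∫ y in (0:ℝ)..π, g y := by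
    intro f g hf hg
    exact intervalIntegral.integral_add (hf.intervalIntegrable _ _) (hg.intervalIntegrable _ _)
  rw [I _ _ (by fun_prop) (by fun_prop), I _ _ (by fun_prop) (by fun_prop),
      I _ _ (by fun_prop) (by fun_prop), I _ _ (by fun_prop) (by fun_prop)]
  rw [intervalIntegral.integral_const_mul, intervalIntegral.integral_const_mul,
      intervalIntegral.integral_const_mul, intervalIntegral.integral_const_mul,
      i1, i2, i3, i4]
  simp [mul_comm]

lemma trig2 (a b : ℝ) :
    ∫ y in (0:ℝ)..π, (a * Real.cos y + b * Real.cos (2*y))^2 = π/2 * (a^2 + b^2) := by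
  have hpt : ∀ y : ℝ, (a * Real.cos y + b * Real.cos (2*y))^2
      = (a^2+b^2)/2 + (a*b) * Real.cos y + (a^2/2) * Real.cos (2*y)
        + (a*b) * Real.cos (3*y) + (b^2/2) * Real.cos (4*y) := by
    intro y
    have h1 := Real.cos_sq y
    have h2 := Real.cos_sq (2*y)
    have h3 : Real.cos (3*y) = Real.cos (2*y) * Real.cos y - Real.sin (2*y) * Real.sin y := by
      rw [show (3:ℝ)*y = 2*y + y by ring, Real.cos_add]
    have h4 : Real.cos y = Real.cos (2*y) * Real.cos y + Real.sin (2*y) * Real.sin y := by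
      nth_rewrite 1 [show y = 2*y - y by ring]
      rw [Real.cos_sub]
    have h2' : Real.cos (2*(2*y)) = Real.cos (4*y) := by ring_nf
    rw [h2'] at h2
    linear_combination a^2*h1 + b^2*h2 - a*b*h3 - a*b*h4
  simp only [hpt]
  rw [Iconst5]
  ring

lemma trig2' (a b : ℝ) :
    ∫ y in (0:ℝ)..π, (a * Real.sin y + b * Real.sin (2*y))^2 = π/2 * (a^2 + b^2) := by
  have hpt : ∀ y : ℝ, (a * Real.sin y + b * Real.sin (2*y))^2
      = (a^2+b^2)/2 + (a*b) * Real.cos y + (-(a^2/2)) * Real.cos (2*y)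
        + (-(a*b)) * Real.cos (3*y) + (-(b^2/2)) * Real.cos (4*y) := by
    intro y
    have h1 := Real.sin_sq_eq_half_sub y
    have h2 := Real.sin_sq_eq_half_sub (2*y)
    have h3 : Real.cos (3*y) = Real.cos (2*y) * Real.cos y - Real.sin (2*y) * Real.sin y := by
      rw [show (3:ℝ)*y = 2*y + y by ring, Real.cos_add]
    have h4 : Real.cos y = Real.cos (2*y) * Real.cos y + Real.sin (2*y) * Real.sin y := by
      nth_rewrite 1 [show y = 2*y - y by ring]
      rw [Real.cos_sub]
    have h2' : Real.cos (2*(2*y)) = Real.cos (4*y) := by ring_nf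
    rw [h2'] at h2
    linear_combination a^2*h1 + b^2*h2 + a*b*h3 - a*b*h4
  simp only [hpt]
  rw [Iconst5]
  ring

lemma Isin2 (k : ℕ) (hk : 1 ≤ k) :
    ∫ x in (0:ℝ)..π, Real.sin ((k:ℝ)*x)^2 = π/2 := by
  have hpt : ∀ x : ℝ, Real.sin ((k:ℝ)*x)^2 = 1/2 - 1/2 * Real.cos ((2*k:ℝ)*x) := by
    intro x
    rw [Real.sin_sq_eq_half_sub]
    ring_nf
  simp only [hpt]
  have hc : ((2*k:ℕ):ℝ) ≠ 0 := by positivity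
  have h0 : ∫ x in (0:ℝ)..π, Real.cos (((2*k:ℕ):ℝ)*x) = 0 :=
    Icos _ hc (Real.sin_nat_mul_pi (2*k))
  push_cast at h0
  rw [intervalIntegral.integral_sub (Continuous.intervalIntegrable (by fun_prop) _ _)
    (Continuous.intervalIntegrable (by fun_prop) _ _),
    intervalIntegral.integral_const_mul, h0]
  simp
  ring

lemma Icos2 (k : ℕ) (hk : 1 ≤ k) :
    ∫ x in (0:ℝ)..π, Real.cos ((k:ℝ)*x)^2 = π/2 := by
  have hpt : ∀ x : ℝ, Real.cos ((k:ℝ)*x)^2 = 1/2 + 1/2 * Real.cos ((2*k:ℝ)*x) := by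
    intro x
    rw [Real.cos_sq]
    ring_nf
  simp only [hpt]
  have hc : ((2*k:ℕ):ℝ) ≠ 0 := by positivity
  have h0 : ∫ x in (0:ℝ)..π, Real.cos (((2*k:ℕ):ℝ)*x) = 0 :=
    Icos _ hc (Real.sin_nat_mul_pi (2*k))
  push_cast at h0
  rw [intervalIntegral.integral_add (Continuous.intervalIntegrable (by fun_prop) _ _)
    (Continuous.intervalIntegrable (by fun_prop) _ _),
    intervalIntegral.integral_const_mul, h0]
  simp
  ring

lemma hasDerivAt_sin_mul (c x : ℝ) :
    HasDerivAt (fun u => Real.sin (c * u)) (Real.cos (c * x) * c) x := by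
  simpa [Function.comp_def] using (Real.hasDerivAt_sin (c * x)).comp x ((hasDerivAt_id x).const_mul c)

lemma hasDerivAt_cos_mul (c x : ℝ) :
    HasDerivAt (fun u => Real.cos (c * u)) (-Real.sin (c * x) * c) x := by
  simpa [Function.comp_def] using (Real.hasDerivAt_cos (c * x)).comp x ((hasDerivAt_id x).const_mul c)

lemma derivx_v (k : ℕ) (y x : ℝ) :
    deriv (fun x' => vfun k x' y) x
      = (Real.cos ((k:ℝ)*x) * k) * (((k:ℝ)^2+1)⁻¹ * Real.cos y
          - 4*((k:ℝ)^2+4)⁻¹ * Real.cos (2*y)) := by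
  have := ((hasDerivAt_sin_mul (k:ℝ) x).mul_const
    (((k:ℝ)^2+1)⁻¹ * Real.cos y - 4*((k:ℝ)^2+4)⁻¹ * Real.cos (2*y)))
  simpa [vfun] using this.deriv

lemma derivy_v (k : ℕ) (x y : ℝ) :
    deriv (fun y' => vfun k x y') y
      = Real.sin ((k:ℝ)*x) * ((-((k:ℝ)^2+1)⁻¹) * Real.sin y
          + (2*(4*((k:ℝ)^2+4)⁻¹)) * Real.sin (2*y)) := by
  have h1 : HasDerivAt (fun y' => ((k:ℝ)^2+1)⁻¹ * Real.cos y'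
      - 4*((k:ℝ)^2+4)⁻¹ * Real.cos (2*y'))
      (((k:ℝ)^2+1)⁻¹ * (-Real.sin y) - 4*((k:ℝ)^2+4)⁻¹ * (-Real.sin (2*y) * 2)) y :=
    ((Real.hasDerivAt_cos y).const_mul _).sub ((hasDerivAt_cos_mul 2 y).const_mul _)
  have h2 := h1.const_mul (Real.sin ((k:ℝ)*x))
  rw [show (fun y' => Real.sin ((k:ℝ)*x) * (((k:ℝ)^2+1)⁻¹ * Real.cos y'
      - 4*((k:ℝ)^2+4)⁻¹ * Real.cos (2*y'))) = fun y' => vfun k x y' from rfl] at h2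
  rw [h2.deriv]; ring

lemma derivy_q (k : ℕ) (x y : ℝ) :
    deriv (fun y' => qfun k x y') y
      = Real.sin ((k:ℝ)*x) * ((-1) * Real.sin y + 2 * Real.sin (2*y)) := by
  have h1 : HasDerivAt (fun y' => Real.cos y' - Real.cos (2*y'))
      (-Real.sin y - (-Real.sin (2*y) * 2)) y :=
    (Real.hasDerivAt_cos y).sub (hasDerivAt_cos_mul 2 y)
  have h2 := h1.const_mul (Real.sin ((k:ℝ)*x))
  rw [show (fun y' => Real.sin ((k:ℝ)*x) * (Real.cos y' - Real.cos (2*y')))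
      = fun y' => qfun k x y' from rfl] at h2
  rw [h2.deriv]; ring

lemma inner_val (u v a b : ℝ) :
    ∫ y in (0:ℝ)..π, ((u * (a * Real.cos y - b * Real.cos (2*y)))^2
        + (v * (-a * Real.sin y + 2*b * Real.sin (2*y)))^2)
      = u^2 * (π/2*(a^2+b^2)) + v^2 * (π/2*(a^2+4*b^2)) := by
  have e : ∀ y : ℝ, (u * (a * Real.cos y - b * Real.cos (2*y)))^2
        + (v * (-a * Real.sin y + 2*b * Real.sin (2*y)))^2
      = u^2 * (a * Real.cos y + (-b) * Real.cos (2*y))^2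
        + v^2 * ((-a) * Real.sin y + (2*b) * Real.sin (2*y))^2 := fun y => by ring
  simp only [e]
  rw [intervalIntegral.integral_add (Continuous.intervalIntegrable (by fun_prop) _ _)
    (Continuous.intervalIntegrable (by fun_prop) _ _),
    intervalIntegral.integral_const_mul, intervalIntegral.integral_const_mul,
    trig2, trig2']
  ring

lemma inner_q (v : ℝ) :
    ∫ y in (0:ℝ)..π, (v * ((-1) * Real.sin y + 2 * Real.sin (2*y)))^2
      = v^2 * (π/2*5) := by
  have e : ∀ y : ℝ, (v * ((-1) * Real.sin y + 2 * Real.sin (2*y)))^2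
      = v^2 * ((-1) * Real.sin y + 2 * Real.sin (2*y))^2 := fun y => by ring
  simp only [e]
  rw [intervalIntegral.integral_const_mul, trig2' (-1) 2]
  norm_num

lemma outer_val (k : ℕ) (hk : 1 ≤ k) (P Q : ℝ) :
    ∫ x in (0:ℝ)..π, ((Real.cos ((k:ℝ)*x) * (k:ℝ))^2 * P + Real.sin ((k:ℝ)*x)^2 * Q)
      = π/2 * ((k:ℝ)^2 * P + Q) := by
  have e : ∀ x : ℝ, (Real.cos ((k:ℝ)*x) * (k:ℝ))^2 * P + Real.sin ((k:ℝ)*x)^2 * Q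
      = ((k:ℝ)^2 * P) * Real.cos ((k:ℝ)*x)^2 + Q * Real.sin ((k:ℝ)*x)^2 := fun x => by ring
  simp only [e]
  rw [intervalIntegral.integral_add (Continuous.intervalIntegrable (by fun_prop) _ _)
    (Continuous.intervalIntegrable (by fun_prop) _ _),
    intervalIntegral.integral_const_mul, intervalIntegral.integral_const_mul,
    Icos2 k hk, Isin2 k hk]
  ring

lemma outer_q (k : ℕ) (hk : 1 ≤ k) (Q : ℝ) :
    ∫ x in (0:ℝ)..π, Real.sin ((k:ℝ)*x)^2 * Q = π/2 * Q := by
  have e : ∀ x : ℝ, Real.sin ((k:ℝ)*x)^2 * Q = Q * Real.sin ((k:ℝ)*x)^2 := fun x => by ring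
  simp only [e]
  rw [intervalIntegral.integral_const_mul, Isin2 k hk]
  ring

end Aux

/-- Explicit integral computations for the counterexample of Remark 3:
`∫_Ω |∇v_k|² = (π²/4)(1/(k²+1) + 16/(k²+4))`, `∫_Ω (∂_y q_k)² = 5π²/4`, the
corresponding ratio of square roots equals `(1/√5)√(1/(k²+1) + 16/(k²+4))`,
and this quantity tends to `0` as `k → ∞`. -/
theorem stmt18 :
    (∀ k : ℕ, 1 ≤ k →
      (∫ x in (0:ℝ)..π, ∫ y in (0:ℝ)..π,
          ((deriv (fun x' => vfun k x' y) x) ^ 2 + (deriv (fun y' => vfun k x y') y) ^ 2))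
        = π ^ 2 / 4 * (1 / ((k : ℝ) ^ 2 + 1) + 16 / ((k : ℝ) ^ 2 + 4))
      ∧ (∫ x in (0:ℝ)..π, ∫ y in (0:ℝ)..π,
          (deriv (fun y' => qfun k x y') y) ^ 2) = 5 * π ^ 2 / 4
      ∧ Real.sqrt (∫ x in (0:ℝ)..π, ∫ y in (0:ℝ)..π,
            ((deriv (fun x' => vfun k x' y) x) ^ 2 + (deriv (fun y' => vfun k x y') y) ^ 2))
          / Real.sqrt (∫ x in (0:ℝ)..π, ∫ y in (0:ℝ)..π,
            (deriv (fun y' => qfun k x y') y) ^ 2)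
        = 1 / Real.sqrt 5 * Real.sqrt (1 / ((k : ℝ) ^ 2 + 1) + 16 / ((k : ℝ) ^ 2 + 4)))
    ∧ Filter.Tendsto
        (fun k : ℕ => 1 / Real.sqrt 5 *
          Real.sqrt (1 / ((k : ℝ) ^ 2 + 1) + 16 / ((k : ℝ) ^ 2 + 4)))
        Filter.atTop (nhds 0) := by
  constructor
  · intro k hk
    have hk1 : ((k:ℝ)^2 + 1) ≠ 0 := by positivity
    have hk4 : ((k:ℝ)^2 + 4) ≠ 0 := by positivity
    have h1 : (∫ x in (0:ℝ)..π, ∫ y in (0:ℝ)..π,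
        ((deriv (fun x' => vfun k x' y) x) ^ 2 + (deriv (fun y' => vfun k x y') y) ^ 2))
        = π ^ 2 / 4 * (1 / ((k : ℝ) ^ 2 + 1) + 16 / ((k : ℝ) ^ 2 + 4)) := by
      simp only [derivx_v, derivy_v]
      simp only [show ∀ x : ℝ, (∫ y in (0:ℝ)..π,
          ((Real.cos ((k:ℝ)*x) * (k:ℝ)) * (((k:ℝ)^2+1)⁻¹ * Real.cos y
              - 4*((k:ℝ)^2+4)⁻¹ * Real.cos (2*y)))^2
            + (Real.sin ((k:ℝ)*x) * ((-((k:ℝ)^2+1)⁻¹) * Real.sin y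
              + (2*(4*((k:ℝ)^2+4)⁻¹)) * Real.sin (2*y)))^2)
        = (Real.cos ((k:ℝ)*x) * (k:ℝ))^2
            * (π/2*((((k:ℝ)^2+1)⁻¹)^2 + (4*((k:ℝ)^2+4)⁻¹)^2))
          + Real.sin ((k:ℝ)*x)^2
            * (π/2*((((k:ℝ)^2+1)⁻¹)^2 + 4*(4*((k:ℝ)^2+4)⁻¹)^2))
        from fun x => inner_val _ _ _ _]
      rw [outer_val k hk]
      field_simp
      ring
    have h2 : (∫ x in (0:ℝ)..π, ∫ y in (0:ℝ)..π,
        (deriv (fun y' => qfun k x y') y) ^ 2) = 5 * π ^ 2 / 4 := by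
      simp only [derivy_q]
      simp only [show ∀ x : ℝ, (∫ y in (0:ℝ)..π,
          (Real.sin ((k:ℝ)*x) * ((-1) * Real.sin y + 2 * Real.sin (2*y)))^2)
        = Real.sin ((k:ℝ)*x)^2 * (π/2*5) from fun x => inner_q _]
      rw [outer_q k hk]
      ring
    refine ⟨h1, h2, ?_⟩
    rw [h1, h2]
    have hS : (0:ℝ) ≤ 1 / ((k : ℝ) ^ 2 + 1) + 16 / ((k : ℝ) ^ 2 + 4) := by positivity
    rw [show π ^ 2 / 4 * (1 / ((k : ℝ) ^ 2 + 1) + 16 / ((k : ℝ) ^ 2 + 4))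
        = (π/2)^2 * (1 / ((k : ℝ) ^ 2 + 1) + 16 / ((k : ℝ) ^ 2 + 4)) by ring,
      show (5:ℝ) * π ^ 2 / 4 = (π/2)^2 * 5 by ring,
      Real.sqrt_mul (by positivity) , Real.sqrt_mul (by positivity),
      Real.sqrt_sq (by positivity)]
    have h5 : Real.sqrt 5 ≠ 0 := by positivity
    have hpi : (π/2 : ℝ) ≠ 0 := by positivity
    field_simp
  · have hlim : ∀ c : ℝ, 0 < c → Filter.Tendsto (fun k : ℕ => 1 / ((k:ℝ)^2 + c))
        Filter.atTop (nhds 0) := by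
      intro c hc
      simp only [one_div]
      apply Filter.Tendsto.inv_tendsto_atTop
      apply Filter.tendsto_atTop_add_const_right
      exact (Filter.tendsto_pow_atTop (two_ne_zero)).comp (tendsto_natCast_atTop_atTop (R := ℝ))
    have hin : Filter.Tendsto (fun k : ℕ => 1 / ((k:ℝ)^2 + 1) + 16 / ((k:ℝ)^2 + 4))
        Filter.atTop (nhds 0) := by
      have h16 : Filter.Tendsto (fun k : ℕ => 16 / ((k:ℝ)^2 + 4)) Filter.atTop (nhds 0) := by
        have := (hlim 4 (by norm_num)).const_mul (16:ℝ)
        simpa [div_eq_mul_inv] using this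
      simpa using (hlim 1 (by norm_num)).add h16
    have hs : Filter.Tendsto (fun k : ℕ =>
        Real.sqrt (1 / ((k:ℝ)^2 + 1) + 16 / ((k:ℝ)^2 + 4))) Filter.atTop (nhds 0) := by
      have := (Real.continuous_sqrt.tendsto 0).comp hin
      simpa [Function.comp_def] using this
    simpa using hs.const_mul (1 / Real.sqrt 5)
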